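/- Let x, p, rev : [0,∞) → ℝ. Suppose (user incentive compatibility) for all v, ṽ ≥ 0, v·x(v) − p(v) ≥ v·x(ṽ) − p(ṽ); and suppose (cartel incentive compatibility, arising from strong collusion proofness of a user–miner cartel) for all v, ṽ ≥ 0, v·x(v) − p(v) + rev(v) ≥ v·x(ṽ) − p(ṽ) + rev(ṽ). Then rev is constant: rev(v) = rev(ṽ) for all v, ṽ ≥ 0. In words, in any on-chain user simple and strongly collusion proof equilibrium, the miner's interim revenue is independent of any single user's reported value. -/

import Mathlib

private lemma rev_step (x p rev : ℝ → ℝ)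
    (hIC : ∀ v w : ℝ, 0 ≤ v → 0 ≤ w →
      v * x v - p v ≥ v * x w - p w)
    (hCartel : ∀ v w : ℝ, 0 ≤ v → 0 ≤ w →
      v * x v - p v + rev v ≥ v * x w - p w + rev w)
    (a b : ℝ) (hb : 0 ≤ b) (hab : b ≤ a) :
    |rev a - rev b| ≤ (a - b) * (x a - x b) := by
  have ha : 0 ≤ a := hb.trans hab
  have h1 := hIC a b ha hb
  have h2 := hIC b a hb ha
  have h3 := hCartel a b ha hb
  have h4 := hCartel b a hb ha
  rw [abs_le]
  constructor <;> nlinarith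

private lemma rev_key (x p rev : ℝ → ℝ)
    (hIC : ∀ v w : ℝ, 0 ≤ v → 0 ≤ w →
      v * x v - p v ≥ v * x w - p w)
    (hCartel : ∀ v w : ℝ, 0 ≤ v → 0 ≤ w →
      v * x v - p v + rev v ≥ v * x w - p w + rev w)
    (v w : ℝ) (hw : 0 ≤ w) (hwv : w ≤ v) : rev v = rev w := by
  have hv : 0 ≤ v := hw.trans hwv
  have main : ∀ n : ℕ, 0 < n →
      |rev v - rev w| ≤ (v - w) * (x v - x w) / n := by
    intro n hn
    set d : ℝ := (v - w) / n with hd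
    have hnR : (0:ℝ) < n := by exact_mod_cast hn
    have hd0 : 0 ≤ d := div_nonneg (by linarith) hnR.le
    set f : ℕ → ℝ := fun i => w + i * d with hf
    have hf0 : f 0 = w := by simp [hf]
    have hfn : f n = v := by
      simp only [hf, hd]
      field_simp
      ring
    have hfi : ∀ i : ℕ, 0 ≤ f i := by
      intro i
      have : 0 ≤ (i : ℝ) * d := mul_nonneg (Nat.cast_nonneg i) hd0
      simp only [hf]; linarith
    have hstep : ∀ i : ℕ, f (i + 1) - f i = d := by
      intro i
      simp only [hf, Nat.cast_add, Nat.cast_one]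
      ring
    have htel : ∑ i ∈ Finset.range n, (rev (f (i + 1)) - rev (f i))
        = rev v - rev w := by
      rw [Finset.sum_range_sub (fun i => rev (f i)), hf0, hfn]
    have hxtel : ∑ i ∈ Finset.range n, (x (f (i + 1)) - x (f i))
        = x v - x w := by
      rw [Finset.sum_range_sub (fun i => x (f i)), hf0, hfn]
    calc |rev v - rev w|
        = |∑ i ∈ Finset.range n, (rev (f (i + 1)) - rev (f i))| := by rw [htel]
      _ ≤ ∑ i ∈ Finset.range n, |rev (f (i + 1)) - rev (f i)| :=
          Finset.abs_sum_le_sum_abs _ _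
      _ ≤ ∑ i ∈ Finset.range n, d * (x (f (i + 1)) - x (f i)) := by
          apply Finset.sum_le_sum
          intro i _
          have hle : f i ≤ f (i + 1) := by
            have := hstep i; linarith
          have := rev_step x p rev hIC hCartel (f (i + 1)) (f i) (hfi i) hle
          rwa [hstep i] at this
      _ = d * (x v - x w) := by rw [← Finset.mul_sum, hxtel]
      _ = (v - w) * (x v - x w) / n := by rw [hd]; ring
  have hC : 0 ≤ (v - w) * (x v - x w) := by
    have h1 := hIC v w hv hw
    have h2 := hIC w v hw hv
    nlinarith
  set C := (v - w) * (x v - x w) with hCdef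
  have habs : |rev v - rev w| ≤ 0 := by
    by_contra h
    push_neg at h
    obtain ⟨n, hn⟩ := exists_nat_gt (C / |rev v - rev w|)
    have hn0 : 0 < n := by
      by_contra hn0
      push_neg at hn0
      interval_cases n
      simp at hn
      nlinarith [div_nonneg hC h.le]
    have h1 := main n hn0
    have hnR : (0:ℝ) < n := by exact_mod_cast hn0
    have : C / |rev v - rev w| * |rev v - rev w| < n * |rev v - rev w| :=
      mul_lt_mul_of_pos_right hn h
    rw [div_mul_cancel₀ _ (ne_of_gt h)] at this
    have h2 : C / n < |rev v - rev w| := by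
      rw [div_lt_iff₀ hnR]; linarith
    linarith
  have := abs_nonneg (rev v - rev w)
  have : |rev v - rev w| = 0 := le_antisymm habs this
  have := abs_eq_zero.mp this
  linarith

/-- **On-chain user simplicity plus strong collusion proofness force a
constant interim miner revenue.**
Let `x v`, `p v`, `rev v` be the interim allocation, payment, and miner
revenue when a fixed user reports value `v ≥ 0`.  If the user's interim
utility satisfies incentive compatibility, and the cartel's utility
`v·x(w) − p(w) + rev(w)` is maximized at the truthful report `w = v`
(strong collusion proofness of a miner–user cartel), then the miner's
interim revenue is independent of the user's reported value. -/
theorem constant_interim_revenue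
    (x p rev : ℝ → ℝ)
    (hIC : ∀ v w : ℝ, 0 ≤ v → 0 ≤ w →
      v * x v - p v ≥ v * x w - p w)
    (hCartel : ∀ v w : ℝ, 0 ≤ v → 0 ≤ w →
      v * x v - p v + rev v ≥ v * x w - p w + rev w) :
    ∀ v w : ℝ, 0 ≤ v → 0 ≤ w → rev v = rev w := by
  intro v w hv hw
  rcases le_total w v with h | h
  · exact rev_key x p rev hIC hCartel v w hw h
  · exact (rev_key x p rev hIC hCartel w v hv h).symm
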